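/- arXiv:2504.14484 — 2 statements merged into one kernel-verified Lean document; each statement's English description precedes it below -/
import Mathlib

section
/- Let P be a potential graph with barrier digraph V, let q ∈ S ⊆ N, and suppose T_S ≠ ∅. Then λ^{•q}_S = ν_S − Σ_{t ∈ S} p_{tt} + p_{qq}. Moreover, if y ∈ S satisfies p_{yy} = min_{t ∈ S} p_{tt} and T ∈ T̃_S is a minimum-weight undirected tree on S, then λ^•_S = λ^{•y}_S = Υ^{T_y}, where T_y is the entering tree corresponding to T with root y. -/
open scoped Classical

namespace BarrierForests

variable {α : Type*} [Fintype α] [DecidableEq α]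

/-- Total weight of a set of arcs. -/
def aweight (v : α → α → ℝ) (A : Finset (α × α)) : ℝ := ∑ a ∈ A, v a.1 a.2

/-- Weight `Υ^A_S` of the arcs of `A` whose tail lies in `S`. -/
def aweightOn (v : α → α → ℝ) (A : Finset (α × α)) (S : Finset α) : ℝ :=
  ∑ a ∈ A.filter (fun a => a.1 ∈ S), v a.1 a.2

/-- The relation "there is an arc from `i` to `j` in `A`". -/
def arcRel (A : Finset (α × α)) : α → α → Prop := fun i j => (i, j) ∈ A

/-- Entering forest: every vertex has out-degree at most one, and there are no
directed cycles. -/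
def IsEForest (A : Finset (α × α)) : Prop :=
  (∀ i j j', (i, j) ∈ A → (i, j') ∈ A → j = j') ∧
  ∀ i, ¬ Relation.TransGen (arcRel A) i i

/-- Roots of a (spanning) entering forest: the vertices with no outgoing arc. -/
noncomputable def rootSet (A : Finset (α × α)) : Finset α :=
  Finset.univ.filter fun i => ∀ j, (i, j) ∉ A

/-- `𝓕^k`: spanning entering forests of the digraph with arc set `E`
having exactly `k` trees (equivalently, `k` roots). -/
def FSet (E : Finset (α × α)) (k : ℕ) : Set (Finset (α × α)) :=
  {A | A ⊆ E ∧ IsEForest A ∧ (rootSet A).card = k}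

/-- The infimum (in `EReal`, so `⊤` for the empty family) of the `w`-weights of the
members of `s`. -/
noncomputable def minW {β : Type*} (s : Set β) (w : β → ℝ) : EReal :=
  sInf ((fun x => (w x : EReal)) '' s)

/-- `φ^k`: minimum weight of a spanning entering forest with `k` trees. -/
noncomputable def phi (v : α → α → ℝ) (E : Finset (α × α)) (k : ℕ) : EReal :=
  minW (FSet E k) (aweight v)

/-- `F ∈ 𝓕̃^k`: minimal spanning entering forest with `k` trees. -/
def IsMinForest (v : α → α → ℝ) (E : Finset (α × α)) (k : ℕ) (F : Finset (α × α)) : Prop :=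
  F ∈ FSet E k ∧ (aweight v F : EReal) = phi v E k

/-- Vertex set of the tree `T^F_i` of the entering forest `F` rooted at `i`:
all vertices from which `i` is reachable. -/
noncomputable def treeVerts (F : Finset (α × α)) (i : α) : Finset α :=
  Finset.univ.filter fun j => Relation.ReflTransGen (arcRel F) j i

/-- Arc set of the tree `T^F_i`. -/
noncomputable def treeArcs (F : Finset (α × α)) (i : α) : Finset (α × α) :=
  F.filter fun a => a.1 ∈ treeVerts F i

/-- Induced subgraph (restriction) of the arc set `A` on the vertex set `S`. -/
def restrictArcs (A : Finset (α × α)) (S : Finset α) : Finset (α × α) :=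
  A.filter fun a => a.1 ∈ S ∧ a.2 ∈ S

/-- `T ∈ 𝓣^{•q}_S`: `T` is an entering tree that is a subgraph of the digraph with
arc set `E`, with vertex set `S` and root `q`. -/
def IsTreeOn (E T : Finset (α × α)) (S : Finset α) (q : α) : Prop :=
  q ∈ S ∧ T ⊆ E ∧ (∀ a ∈ T, a.1 ∈ S ∧ a.2 ∈ S) ∧
  (∀ i ∈ S, i ≠ q → ∃! j, (i, j) ∈ T) ∧
  (∀ j, (q, j) ∉ T) ∧
  ∀ i ∈ S, Relation.ReflTransGen (arcRel T) i q

/-- `λ^{•q}_S`. -/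
noncomputable def lamB (v : α → α → ℝ) (E : Finset (α × α)) (S : Finset α) (q : α) : EReal :=
  minW {T | IsTreeOn E T S q} (aweight v)

/-- `λ^•_S = min_{q ∈ S} λ^{•q}_S`. -/
noncomputable def lamBul (v : α → α → ℝ) (E : Finset (α × α)) (S : Finset α) : EReal :=
  minW {T | ∃ q ∈ S, IsTreeOn E T S q} (aweight v)

/-- `T ∈ 𝓣^{∘q}_S`: `T` has `|S| + 1` vertices, `T|_S` is an entering tree with vertex
set `S` and root `q`, and the single arc of `T` leaving `S` goes from `q` to the root
`r ∉ S` of `T`. -/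
def IsCTreeOn (E T : Finset (α × α)) (S : Finset α) (q : α) : Prop :=
  ∃ r, r ∉ S ∧ ∃ T', IsTreeOn E T' S q ∧ (q, r) ∈ E ∧ T = insert (q, r) T'

/-- `λ^{∘q}_S`. -/
noncomputable def lamC (v : α → α → ℝ) (E : Finset (α × α)) (S : Finset α) (q : α) : EReal :=
  minW {T | IsCTreeOn E T S q} (aweight v)

/-- `λ^∘_S = min_{q ∈ S} λ^{∘q}_S`. -/
noncomputable def lamCirc (v : α → α → ℝ) (E : Finset (α × α)) (S : Finset α) : EReal :=
  minW {T | ∃ q ∈ S, IsCTreeOn E T S q} (aweight v)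

/-- `μ^∘_S`: minimum of `Υ^F_S` over the spanning entering forests `F ∈ 𝓕^∘_S`,
i.e. those in which every vertex of `S` has an outgoing arc. -/
noncomputable def muCirc (v : α → α → ℝ) (E : Finset (α × α)) (S : Finset α) : EReal :=
  minW {A | A ⊆ E ∧ IsEForest A ∧ ∀ i ∈ S, ∃ j, (i, j) ∈ A} fun A => aweightOn v A S

/-- `G ∈ 𝓡^F_y`: `G` is a descendant of `F` at the root `y`, i.e. `y` is a root of
`F`, the roots of `G` are those of `F` except `y`, `G` induces `T^F_q` on the vertex
set of every tree of `F` other than `T^F_y`, and `G` induces a tree on the vertex set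
of `T^F_y`. -/
def IsDescendant (E F G : Finset (α × α)) (y : α) : Prop :=
  y ∈ rootSet F ∧ rootSet G = rootSet F \ {y} ∧
  (∀ q ∈ rootSet G, restrictArcs G (treeVerts F q) = treeArcs F q) ∧
  ∃ a ∈ treeVerts F y, IsTreeOn E (restrictArcs G (treeVerts F y)) (treeVerts F y) a

/-- A potential graph: a connected weighted undirected graph with a loop at every
vertex.  Edges are recorded as a symmetric reflexive set of ordered pairs, with a
symmetric weight function `p`. -/
structure PotGraph (α : Type*) [Fintype α] [DecidableEq α] where
  p : α → α → ℝ
  edges : Finset (α × α)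
  symm_mem : ∀ i j, (i, j) ∈ edges → (j, i) ∈ edges
  loop_mem : ∀ i, (i, i) ∈ edges
  symm_w : ∀ i j, p i j = p j i
  connected : ∀ i j : α, Relation.ReflTransGen (fun a b => (a, b) ∈ edges ∧ a ≠ b) i j

/-- Arc set of the barrier digraph of the potential graph `P`: an arc `(i,j)`, `i ≠ j`,
for each non-loop edge of `P`. -/
def barcs (P : PotGraph α) : Finset (α × α) := P.edges.filter fun a => a.1 ≠ a.2

/-- Arc weights of the barrier digraph: `v i j = p i j - p i i`. -/
def bw (P : PotGraph α) : α → α → ℝ := fun i j => P.p i j - P.p i i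

/-- Weight of a set of undirected edges of `P`. -/
noncomputable def uweight (P : PotGraph α) (T : Finset (Sym2 α)) : ℝ :=
  ∑ e ∈ T, Sym2.lift ⟨P.p, P.symm_w⟩ e

/-- `T ∈ 𝓣_S`: `T` is an undirected tree that is a subgraph of `P` (loops unused)
with vertex set `S`: its edges are non-loop edges of `P` joining vertices of `S`,
it is connected on `S`, and it has `|S| - 1` edges. -/
def IsUTreeOn (P : PotGraph α) (T : Finset (Sym2 α)) (S : Finset α) : Prop :=
  (∀ e ∈ T, ∃ i j, i ≠ j ∧ e = s(i, j) ∧ (i, j) ∈ P.edges ∧ i ∈ S ∧ j ∈ S) ∧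
  (∀ i ∈ S, ∀ j ∈ S, Relation.ReflTransGen (fun a b => s(a, b) ∈ T) i j) ∧
  T.card + 1 = S.card

/-- `ν_S`: minimum weight of an undirected tree on `S` that is a subgraph of `P`. -/
noncomputable def nu (P : PotGraph α) (S : Finset α) : EReal :=
  minW {T | IsUTreeOn P T S} (uweight P)

/-- The underlying undirected edge set of a set of arcs. -/
def undir (A : Finset (α × α)) : Finset (Sym2 α) := A.image fun a => s(a.1, a.2)

/-- `Tq` is the entering tree (with root `q`, vertex set `S`, subgraph of the barrier
digraph of `P`) corresponding to the undirected tree `T`: it is obtained from `T` by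
directing all edges toward `q` and replacing the weight of each arc `(i,j)` by
`v i j = p i j - p i i`. -/
def Corresponds (P : PotGraph α) (Tq : Finset (α × α)) (T : Finset (Sym2 α))
    (S : Finset α) (q : α) : Prop :=
  IsTreeOn (barcs P) Tq S q ∧ undir Tq = T

/-! ### Auxiliary lemmas -/

lemma minW_le {β : Type*} {s : Set β} (w : β → ℝ) {x : β} (hx : x ∈ s) :
    minW s w ≤ (w x : EReal) :=
  sInf_le ⟨x, hx, rfl⟩

lemma le_minW {β : Type*} {s : Set β} (w : β → ℝ) {c : EReal}
    (h : ∀ x ∈ s, c ≤ (w x : EReal)) : c ≤ minW s w :=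
  le_sInf (by rintro _ ⟨x, hx, rfl⟩; exact h x hx)

lemma exists_minW {β : Type*} [Finite β] (s : Set β) (w : β → ℝ) (hs : s.Nonempty) :
    ∃ x ∈ s, minW s w = (w x : EReal) ∧ ∀ y ∈ s, w x ≤ w y := by
  obtain ⟨x, hx, hmin⟩ := Set.exists_min_image s w (Set.toFinite s) hs
  refine ⟨x, hx, le_antisymm (minW_le w hx) (le_minW w fun y hy => ?_), hmin⟩
  exact_mod_cast hmin y hy

/-- An edge of an undirected tree on `S` joins two distinct vertices of `S`
and is an edge of `P`. -/
lemma edge_mem_of_utree {P : PotGraph α} {U : Finset (Sym2 α)} {S : Finset α}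
    (hU : IsUTreeOn P U S) {a b : α} (h : s(a, b) ∈ U) :
    (a, b) ∈ P.edges ∧ a ≠ b ∧ a ∈ S ∧ b ∈ S := by
  obtain ⟨i, j, hij, he, hP, hiS, hjS⟩ := hU.1 _ h
  rw [Sym2.eq_iff] at he
  rcases he with ⟨rfl, rfl⟩ | ⟨rfl, rfl⟩
  · exact ⟨hP, hij, hiS, hjS⟩
  · exact ⟨P.symm_mem _ _ hP, hij.symm, hjS, hiS⟩

/-- In an entering tree rooted at `q`, no arc is reversed. -/
lemma no_two_cycle {E T : Finset (α × α)} {S : Finset α} {q : α}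
    (hT : IsTreeOn E T S q) {i j : α} (hij : (i, j) ∈ T) (hji : (j, i) ∈ T) : False := by
  obtain ⟨hqS, _, hend, huniq, hroot, hreach⟩ := hT
  have hiq : i ≠ q := fun h => hroot j (h ▸ hij)
  have hjq : j ≠ q := fun h => hroot i (h ▸ hji)
  have key : ∀ x, Relation.ReflTransGen (arcRel T) x q → x ≠ i ∧ x ≠ j := by
    intro x hx
    induction hx using Relation.ReflTransGen.head_induction_on with
    | refl => exact ⟨fun h => hiq h.symm, fun h => hjq h.symm⟩
    | head hxy _ ih =>
      rename_i x y _
      constructor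
      · rintro rfl
        have : y = j := ((huniq x ((hend _ hij).1) hiq).unique hxy hij)
        exact ih.2 this
      · rintro rfl
        have : y = i := ((huniq x ((hend _ hji).1) hjq).unique hxy hji)
        exact ih.1 this
  exact (key i (hreach i (hend _ hij).1)).1 rfl

/-- Distinct arcs of an entering tree have distinct tails. -/
lemma tail_inj {E T : Finset (α × α)} {S : Finset α} {q : α}
    (hT : IsTreeOn E T S q) {a b : α × α} (ha : a ∈ T) (hb : b ∈ T)
    (hab : a.1 = b.1) : a = b := by
  have h1 : a.1 ∈ S := (hT.2.2.1 _ ha).1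
  have hqa : a.1 ≠ q := fun h => hT.2.2.2.2.1 a.2 (by rw [← h]; exact ha)
  have := (hT.2.2.2.1 a.1 h1 hqa).unique (show (a.1, a.2) ∈ T from ha)
    (show (a.1, b.2) ∈ T by rw [hab]; exact hb)
  have : a = (b.1, b.2) := by rw [← hab]; exact Prod.ext rfl this
  simpa using this

/-- The map `a ↦ s(a.1, a.2)` is injective on an entering tree. -/
lemma undir_injOn {T : Finset (α × α)} {S : Finset α} {q : α}
    {E : Finset (α × α)} (hT : IsTreeOn E T S q) :
    ∀ a ∈ T, ∀ b ∈ T, s(a.1, a.2) = s(b.1, b.2) → a = b := by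
  intro a ha b hb hab
  rw [Sym2.eq_iff] at hab
  rcases hab with ⟨h1, h2⟩ | ⟨h1, h2⟩
  · exact Prod.ext h1 h2
  · exfalso
    have ha' : (a.1, a.2) ∈ T := ha
    have hb' : (a.2, a.1) ∈ T := by
      have : b = (a.2, a.1) := Prod.ext h2.symm h1.symm
      rwa [this] at hb
    exact no_two_cycle hT ha' hb'

/-- Tails of an entering tree rooted at `q` on `S` are exactly `S.erase q`. -/
lemma card_tree {E T : Finset (α × α)} {S : Finset α} {q : α}
    (hT : IsTreeOn E T S q) : T.card = (S.erase q).card := by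
  refine Finset.card_bij (fun a _ => a.1) ?_ ?_ ?_
  · intro a ha
    refine Finset.mem_erase.2 ⟨fun h => hT.2.2.2.2.1 a.2 (by rw [← h]; exact ha),
      (hT.2.2.1 _ ha).1⟩
  · intro a ha b hb hab
    exact tail_inj hT ha hb hab
  · intro i hi
    obtain ⟨hiq, hiS⟩ := Finset.mem_erase.1 hi
    obtain ⟨j, hj, -⟩ := hT.2.2.2.1 i hiS hiq
    exact ⟨(i, j), hj, rfl⟩

/-- Forward direction: the undirected version of an entering tree is an undirected
tree, with the corresponding weight. -/
lemma forward_utree {P : PotGraph α} {T : Finset (α × α)} {S : Finset α} {q : α}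
    (hT : IsTreeOn (barcs P) T S q) :
    IsUTreeOn P (undir T) S ∧
      uweight P (undir T) = aweight (bw P) T + (∑ t ∈ S, P.p t t) - P.p q q := by
  have hsub := hT.2.1
  have hend := hT.2.2.1
  have hbarc : ∀ a ∈ T, (a.1, a.2) ∈ P.edges ∧ a.1 ≠ a.2 := by
    intro a ha
    have := hsub ha
    rw [barcs, Finset.mem_filter] at this
    exact ⟨this.1, this.2⟩
  constructor
  · refine ⟨?_, ?_, ?_⟩
    · intro e he
      obtain ⟨a, ha, rfl⟩ := Finset.mem_image.1 he
      exact ⟨a.1, a.2, (hbarc a ha).2, rfl, (hbarc a ha).1, (hend a ha).1, (hend a ha).2⟩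
    · intro i hi j hj
      have hsymm : Symmetric (fun a b => s(a, b) ∈ undir T) := by
        intro a b h; rwa [Sym2.eq_swap] at h
      have step : ∀ x, Relation.ReflTransGen (arcRel T) x q →
          Relation.ReflTransGen (fun a b => s(a, b) ∈ undir T) x q := by
        intro x hx
        refine Relation.ReflTransGen.mono (fun a b hab => ?_) x q hx
        exact Finset.mem_image.2 ⟨(a, b), hab, rfl⟩
      exact (step i (hT.2.2.2.2.2 i hi)).trans
        ((@Relation.ReflTransGen.stdSymm _ _ ⟨fun a b h => hsymm h⟩).symm _ _ (step j (hT.2.2.2.2.2 j hj)))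
    · have h1 : (undir T).card = T.card :=
        Finset.card_image_of_injOn (undir_injOn hT)
      rw [h1, card_tree hT, Finset.card_erase_add_one hT.1]
  · have h1 : uweight P (undir T) = ∑ a ∈ T, P.p a.1 a.2 := by
      rw [uweight, undir, Finset.sum_image (undir_injOn hT)]
      exact Finset.sum_congr rfl fun a _ => Sym2.lift_mk _ _ _
    have h2 : ∑ a ∈ T, P.p a.1 a.1 = ∑ i ∈ S.erase q, P.p i i := by
      refine Finset.sum_bij (fun a _ => a.1) ?_ ?_ ?_ ?_
      · intro a ha
        exact Finset.mem_erase.2 ⟨fun h => hT.2.2.2.2.1 a.2 (by rw [← h]; exact ha),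
          (hend a ha).1⟩
      · intro a ha b hb hab; exact tail_inj hT ha hb hab
      · intro i hi
        obtain ⟨hiq, hiS⟩ := Finset.mem_erase.1 hi
        obtain ⟨j, hj, -⟩ := hT.2.2.2.1 i hiS hiq
        exact ⟨(i, j), hj, rfl⟩
      · intro a _; rfl
    have h3 : ∑ i ∈ S.erase q, P.p i i = (∑ t ∈ S, P.p t t) - P.p q q :=
      Finset.sum_erase_eq_sub hT.1
    have h4 : aweight (bw P) T = (∑ a ∈ T, P.p a.1 a.2) - ∑ a ∈ T, P.p a.1 a.1 := by
      rw [aweight, ← Finset.sum_sub_distrib]; rfl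
    rw [h1, h4, h2, h3]; ring

/-- A bounded number of `R`-steps. -/
def nsteps (R : α → α → Prop) : ℕ → α → α → Prop
  | 0 => Eq
  | n + 1 => fun i j => ∃ k, R i k ∧ nsteps R n k j

lemma nsteps_succ_right {R : α → α → Prop} :
    ∀ {n : ℕ} {i a b : α}, nsteps R n i a → R a b → nsteps R (n + 1) i b := by
  intro n
  induction n with
  | zero => intro i a b h hab; exact ⟨b, h ▸ hab, rfl⟩
  | succ n ih =>
    rintro i a b ⟨k, hik, hk⟩ hab
    exact ⟨k, hik, ih hk hab⟩

lemma exists_nsteps {R : α → α → Prop} {i j : α}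
    (h : Relation.ReflTransGen R i j) : ∃ n, nsteps R n i j := by
  induction h with
  | refl => exact ⟨0, rfl⟩
  | tail _ hbc ih => obtain ⟨n, hn⟩ := ih; exact ⟨n + 1, nsteps_succ_right hn hbc⟩

/-- Backward direction: an undirected tree on `S` can be oriented toward any
root `q ∈ S`, yielding an entering tree in the barrier digraph. -/
lemma backward_utree {P : PotGraph α} {U : Finset (Sym2 α)} {S : Finset α} {q : α}
    (hq : q ∈ S) (hU : IsUTreeOn P U S) :
    ∃ T, IsTreeOn (barcs P) T S q ∧ undir T = U := by
  classical
  set R : α → α → Prop := fun a b => s(a, b) ∈ U with hR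
  set d : α → ℕ := fun i => if h : ∃ n, nsteps R n i q then Nat.find h else 0 with hd
  have hdq : d q = 0 := by
    rw [hd]
    have h : ∃ n, nsteps R n q q := ⟨0, rfl⟩
    simp only [dif_pos h]
    exact Nat.eq_zero_of_le_zero (Nat.find_le rfl)
  have key : ∀ i ∈ S, i ≠ q → ∃ j, R i j ∧ d j < d i ∧ j ∈ S := by
    intro i hi hiq
    have hex : ∃ n, nsteps R n i q := exists_nsteps (hU.2.1 i hi q hq)
    have hdi : d i = Nat.find hex := by rw [hd]; simp only [dif_pos hex]
    have hpos : Nat.find hex ≠ 0 := by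
      intro h
      have hs := Nat.find_spec hex
      rw [h] at hs
      simp only [nsteps] at hs
      exact hiq hs
    obtain ⟨m, hm⟩ := Nat.exists_eq_succ_of_ne_zero hpos
    have hspec := Nat.find_spec hex
    rw [hm] at hspec
    obtain ⟨k, hik, hk⟩ := hspec
    have hkex : ∃ n, nsteps R n k q := ⟨m, hk⟩
    have hdk : d k ≤ m := by
      rw [hd]; simp only [dif_pos hkex]; exact Nat.find_le hk
    exact ⟨k, hik, by omega, (edge_mem_of_utree hU hik).2.2.2⟩
  set f : α → α := fun i =>
    if h : ∃ j, R i j ∧ d j < d i ∧ j ∈ S then Classical.choose h else i with hf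
  have hfspec : ∀ i ∈ S, i ≠ q → R i (f i) ∧ d (f i) < d i ∧ f i ∈ S := by
    intro i hi hiq
    have h := key i hi hiq
    rw [hf]; simp only [dif_pos h]
    exact Classical.choose_spec h
  set T : Finset (α × α) := (S.erase q).image (fun i => (i, f i)) with hT
  have hmemT : ∀ a : α × α, a ∈ T ↔ a.1 ∈ S.erase q ∧ a.2 = f a.1 := by
    intro a
    rw [hT, Finset.mem_image]
    constructor
    · rintro ⟨i, hi, rfl⟩; exact ⟨hi, rfl⟩
    · rintro ⟨h1, h2⟩; exact ⟨a.1, h1, (Prod.ext rfl h2.symm)⟩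
  have harc : ∀ a : α × α, a ∈ T → R a.1 a.2 ∧ d a.2 < d a.1 ∧ a.1 ∈ S ∧ a.2 ∈ S := by
    intro a ha
    obtain ⟨h1, h2⟩ := (hmemT a).1 ha
    obtain ⟨hq1, hS1⟩ := Finset.mem_erase.1 h1
    obtain ⟨hr, hlt, hfS⟩ := hfspec a.1 hS1 hq1
    exact ⟨h2 ▸ hr, h2 ▸ hlt, hS1, h2 ▸ hfS⟩
  have hTtree : IsTreeOn (barcs P) T S q := by
    refine ⟨hq, ?_, ?_, ?_, ?_, ?_⟩
    · intro a ha
      obtain ⟨hr, -, -, -⟩ := harc a ha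
      obtain ⟨hP, hne, -, -⟩ := edge_mem_of_utree hU hr
      exact Finset.mem_filter.2 ⟨hP, hne⟩
    · intro a ha
      obtain ⟨-, -, h1, h2⟩ := harc a ha
      exact ⟨h1, h2⟩
    · intro i hi hiq
      refine ⟨f i, (hmemT (i, f i)).2 ⟨Finset.mem_erase.2 ⟨hiq, hi⟩, rfl⟩, ?_⟩
      intro j hj
      exact ((hmemT (i, j)).1 hj).2
    · intro j hj
      exact (Finset.mem_erase.1 ((hmemT (q, j)).1 hj).1).1 rfl
    · intro i hi
      have main : ∀ n, ∀ i ∈ S, d i ≤ n → Relation.ReflTransGen (arcRel T) i q := by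
        intro n
        induction n with
        | zero =>
          intro i hi hdi
          by_cases hiq : i = q
          · exact hiq ▸ Relation.ReflTransGen.refl
          · exact absurd (Nat.le_zero.1 hdi) (by
              have := (hfspec i hi hiq).2.1; omega)
        | succ n ih =>
          intro i hi hdi
          by_cases hiq : i = q
          · exact hiq ▸ Relation.ReflTransGen.refl
          · obtain ⟨-, hlt, hfS⟩ := hfspec i hi hiq
            have harcT : arcRel T i (f i) :=
              (hmemT (i, f i)).2 ⟨Finset.mem_erase.2 ⟨hiq, hi⟩, rfl⟩
            exact Relation.ReflTransGen.head harcT (ih (f i) hfS (by omega))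
      exact main (d i) i hi le_rfl
  refine ⟨T, hTtree, ?_⟩
  have hsub : undir T ⊆ U := by
    intro e he
    obtain ⟨a, ha, rfl⟩ := Finset.mem_image.1 he
    exact (harc a ha).1
  refine Finset.eq_of_subset_of_card_le hsub ?_
  have h1 : (undir T).card = T.card := Finset.card_image_of_injOn (undir_injOn hTtree)
  have h2 : T.card = (S.erase q).card := card_tree hTtree
  have h3 : U.card + 1 = S.card := hU.2.2
  rw [h1, h2, Finset.card_erase_of_mem hq]
  omega

/-- Assertion 5.  If `q ∈ S` and `𝓣_S ≠ ∅`, then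
`λ^{•q}_S = ν_S - ∑_{t ∈ S} p t t + p q q`.  Moreover, if `y ∈ S` has the minimal loop
weight and `T ∈ 𝓣̃_S` is a minimum-weight undirected tree on `S`, then
`λ^•_S = λ^{•y}_S = Υ^{T_y}` where `T_y` is the entering tree corresponding to `T`
with root `y`. -/
theorem statement12 (P : PotGraph α) (S : Finset α) (q : α) (hq : q ∈ S)
    (hne : ∃ T, IsUTreeOn P T S) :
    lamB (bw P) (barcs P) S q =
        nu P S - ((∑ t ∈ S, P.p t t : ℝ) : EReal) + ((P.p q q : ℝ) : EReal) ∧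
      ∀ y ∈ S, (∀ t ∈ S, P.p y y ≤ P.p t t) →
        ∀ T : Finset (Sym2 α), IsUTreeOn P T S →
          (∀ U, IsUTreeOn P U S → uweight P T ≤ uweight P U) →
            ∀ Ty : Finset (α × α), Corresponds P Ty T S y →
              lamBul (bw P) (barcs P) S = lamB (bw P) (barcs P) S y ∧
                lamB (bw P) (barcs P) S y = ((aweight (bw P) Ty : ℝ) : EReal) := by
  constructor
  · -- first claim
    obtain ⟨U₀, hU₀, hnuEq, hU₀min⟩ := exists_minW {U | IsUTreeOn P U S} (uweight P) hne
    obtain ⟨Tq, hTq, hTqU⟩ := backward_utree hq hU₀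
    have hTne : ({T | IsTreeOn (barcs P) T S q} : Set (Finset (α × α))).Nonempty :=
      ⟨Tq, hTq⟩
    obtain ⟨T', hT', hlamEq, hT'min⟩ :=
      exists_minW {T | IsTreeOn (barcs P) T S q} (aweight (bw P)) hTne
    obtain ⟨hTqU', hwTq⟩ := forward_utree hTq
    rw [hTqU] at hwTq
    obtain ⟨hT'U, hwT'⟩ := forward_utree hT'
    have hle1 : aweight (bw P) T' ≤ aweight (bw P) Tq := hT'min Tq hTq
    have hle2 : uweight P U₀ ≤ uweight P (undir T') := hU₀min _ hT'U
    have hmain : aweight (bw P) T' =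
        uweight P U₀ - (∑ t ∈ S, P.p t t) + P.p q q := by linarith
    rw [lamB, hlamEq, nu, hnuEq, hmain]
    rw [← EReal.coe_sub, ← EReal.coe_add]
  · -- second claim
    intro y hy hymin T hT hTmin Ty hCorr
    obtain ⟨hTy, hund⟩ := hCorr
    obtain ⟨hTyU, hwTy⟩ := forward_utree hTy
    rw [hund] at hwTy
    have claimA : lamB (bw P) (barcs P) S y = ((aweight (bw P) Ty : ℝ) : EReal) := by
      refine le_antisymm (minW_le _ hTy) (le_minW _ fun T' hT' => ?_)
      obtain ⟨hT'U, hwT'⟩ := forward_utree hT'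
      have h1 : uweight P T ≤ uweight P (undir T') := hTmin _ hT'U
      exact_mod_cast (by linarith : aweight (bw P) Ty ≤ aweight (bw P) T')
    refine ⟨le_antisymm ?_ ?_, claimA⟩
    · rw [claimA]
      exact minW_le _ ⟨y, hy, hTy⟩
    · rw [claimA]
      refine le_minW _ ?_
      rintro T' ⟨q', hq', hT'⟩
      obtain ⟨hT'U, hwT'⟩ := forward_utree hT'
      have h1 : uweight P T ≤ uweight P (undir T') := hTmin _ hT'U
      have h2 : P.p y y ≤ P.p q' q' := hymin q' hq'
      exact_mod_cast (by linarith : aweight (bw P) Ty ≤ aweight (bw P) T')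

end BarrierForests
end

section
/- Let P be a potential graph with barrier digraph V, and let S ⊊ N be such that T_S ≠ ∅ and P has at least one edge joining a vertex of S to a vertex of N \ S. Then λ°_S = ν_S − Σ_{t ∈ S} p_{tt} + min { p_{qr} : q ∈ S, r ∉ S, (q,r) an edge of P }. -/
open scoped Classical

namespace BarrierForests

variable {α : Type*} [Fintype α] [DecidableEq α]

section Aux
set_option linter.unusedSectionVars false
variable {α : Type*} [Fintype α] [DecidableEq α]

lemma uniq_out {E Tq : Finset (α × α)} {S : Finset α} {q : α}
    (h : IsTreeOn E Tq S q) {a b : α × α} (ha : a ∈ Tq) (hb : b ∈ Tq)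
    (hab : a.1 = b.1) : a = b := by
  obtain ⟨hq, hTE, hin, huniq, hroot, hreach⟩ := h
  have h1 : a.1 ∈ S := (hin a ha).1
  have hne : a.1 ≠ q := by
    rintro rfl
    exact hroot a.2 (by simpa using ha)
  obtain ⟨j, hj, hju⟩ := huniq a.1 h1 hne
  have h2 : a.2 = j := hju a.2 (by simpa using ha)
  have h3 : b.2 = j := hju b.2 (by show (a.1, b.2) ∈ Tq; rw [hab]; simpa using hb)
  exact Prod.ext hab (h2.trans h3.symm)

lemma sym2_injOn {E Tq : Finset (α × α)} {S : Finset α} {q : α}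
    (h : IsTreeOn E Tq S q) {a b : α × α} (ha : a ∈ Tq) (hb : b ∈ Tq)
    (hab : s(a.1, a.2) = s(b.1, b.2)) : a = b := by
  rcases Sym2.eq_iff.1 hab with ⟨h1, h2⟩ | ⟨h1, h2⟩
  · exact Prod.ext h1 h2
  by_cases hfst : a.1 = b.1
  · exact uniq_out h ha hb hfst
  exfalso
  have hb' : b = (a.2, a.1) := Prod.ext h2.symm h1.symm
  rw [hb'] at hb
  -- hfst : a.1 ≠ a.2 (since b.1 = a.2)
  have key : ∀ x y, Relation.ReflTransGen (arcRel Tq) x y →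
      (x = a.1 ∨ x = a.2) → (y = a.1 ∨ y = a.2) := by
    intro x y hxy
    induction hxy with
    | refl => exact id
    | tail h1' h2' ih =>
      intro hx
      rcases ih hx with rfl | rfl
      · right
        have := uniq_out h h2' ha rfl
        exact congrArg Prod.snd this
      · left
        have := uniq_out h h2' hb rfl
        exact congrArg Prod.snd this
  have hreach := h.2.2.2.2.2 a.1 (h.2.2.1 a ha).1
  rcases key a.1 q hreach (Or.inl rfl) with rfl | rfl
  · exact h.2.2.2.2.1 a.2 (by simpa using ha)
  · exact h.2.2.2.2.1 a.1 (by simpa using hb)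

lemma fst_image {E Tq : Finset (α × α)} {S : Finset α} {q : α}
    (h : IsTreeOn E Tq S q) : Tq.image Prod.fst = S.erase q := by
  ext i
  simp only [Finset.mem_image, Finset.mem_erase]
  constructor
  · rintro ⟨a, ha, rfl⟩
    refine ⟨?_, (h.2.2.1 a ha).1⟩
    rintro rfl
    exact h.2.2.2.2.1 a.2 (by simpa using ha)
  · rintro ⟨hiq, hiS⟩
    obtain ⟨j, hj, -⟩ := h.2.2.2.1 i hiS hiq
    exact ⟨(i, j), hj, rfl⟩

lemma aweight_tree (P : PotGraph α) {Tq : Finset (α × α)} {S : Finset α} {q : α}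
    (h : IsTreeOn (barcs P) Tq S q) :
    aweight (bw P) Tq = uweight P (undir Tq) - (∑ t ∈ S, P.p t t) + P.p q q := by
  have h1 : uweight P (undir Tq) = ∑ a ∈ Tq, P.p a.1 a.2 := by
    rw [uweight, undir, Finset.sum_image (fun a ha b hb hab => sym2_injOn h ha hb hab)]
    exact Finset.sum_congr rfl fun a _ => rfl
  have h2 : ∑ a ∈ Tq, P.p a.1 a.1 = (∑ t ∈ S, P.p t t) - P.p q q := by
    have hsi : ∑ i ∈ Tq.image Prod.fst, P.p i i = ∑ a ∈ Tq, P.p a.1 a.1 :=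
      Finset.sum_image (fun a ha b hb hab => uniq_out h ha hb hab)
    rw [fst_image h] at hsi
    rw [← hsi, Finset.sum_erase_eq_sub h.1]
  simp only [aweight, bw]
  rw [Finset.sum_sub_distrib, h1, h2]
  ring

lemma undir_isUTreeOn (P : PotGraph α) {Tq : Finset (α × α)} {S : Finset α} {q : α}
    (h : IsTreeOn (barcs P) Tq S q) : IsUTreeOn P (undir Tq) S := by
  refine ⟨?_, ?_, ?_⟩
  · intro e he
    simp only [undir, Finset.mem_image] at he
    obtain ⟨a, ha, rfl⟩ := he
    have hb := h.2.1 ha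
    simp only [barcs, Finset.mem_filter] at hb
    exact ⟨a.1, a.2, hb.2, rfl, hb.1, (h.2.2.1 a ha).1, (h.2.2.1 a ha).2⟩
  · intro i hi j hj
    have hsymm : Symmetric (fun a b : α => s(a, b) ∈ undir Tq) := by
      intro a b hab
      rwa [Sym2.eq_swap]
    have mono : ∀ x y, arcRel Tq x y → s(x, y) ∈ undir Tq := by
      intro x y hxy
      exact Finset.mem_image.2 ⟨(x, y), hxy, rfl⟩
    have h1 := Relation.ReflTransGen.mono mono _ _ (h.2.2.2.2.2 i hi)
    have h2 := Relation.ReflTransGen.mono mono _ _ (h.2.2.2.2.2 j hj)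
    exact h1.trans (by haveI : Std.Symm (fun a b : α => s(a, b) ∈ undir Tq) := ⟨fun a b hab => hsymm hab⟩; exact Std.Symm.symm _ _ h2)
  · have hcard : (undir Tq).card = Tq.card :=
      Finset.card_image_of_injOn (fun a ha b hb hab => sym2_injOn h ha hb hab)
    have hcard2 : Tq.card = (S.erase q).card := by
      rw [← fst_image h]
      exact (Finset.card_image_of_injOn (fun a ha b hb hab => uniq_out h ha hb hab)).symm
    rw [hcard, hcard2, Finset.card_erase_of_mem h.1]
    have : 1 ≤ S.card := Finset.card_pos.2 ⟨q, h.1⟩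
    omega

end Aux

section Aux2
set_option linter.unusedSectionVars false
set_option maxHeartbeats 1000000
variable {α : Type*} [Fintype α] [DecidableEq α]

lemma exists_orient (P : PotGraph α) :
    ∀ (n : ℕ) (S : Finset α) (T : Finset (Sym2 α)) (q : α), S.card = n →
      IsUTreeOn P T S → q ∈ S →
      ∃ Tq, IsTreeOn (barcs P) Tq S q ∧ undir Tq = T := by
  intro n
  induction n using Nat.strong_induction_on with
  | _ n ih =>
  intro S T q hcard hT hq
  rcases Nat.lt_or_ge n 2 with hn | hn
  · -- base case: S = {q}
    have hS1 : S.card = 1 := by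
      have : 1 ≤ S.card := Finset.card_pos.2 ⟨q, hq⟩
      omega
    have hT0 : T = ∅ := by
      have h2 := hT.2.2
      have : T.card = 0 := by omega
      exact Finset.card_eq_zero.1 this
    have hSq : S = {q} := by
      obtain ⟨a, haS⟩ := Finset.card_eq_one.1 hS1
      rw [haS] at hq ⊢
      rw [Finset.mem_singleton] at hq
      rw [hq]
    refine ⟨∅, ⟨hq, ?_, ?_, ?_, ?_, ?_⟩, ?_⟩
    · intro a ha; exact absurd ha (Finset.notMem_empty a)
    · intro a ha; exact absurd ha (Finset.notMem_empty a)
    · intro i hi hiq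
      rw [hSq, Finset.mem_singleton] at hi
      exact absurd hi hiq
    · intro j; exact Finset.notMem_empty _
    · intro i hi
      rw [hSq, Finset.mem_singleton] at hi
      rw [hi]
    · simp [undir, hT0]
  -- main case: n ≥ 2
  -- degree function
  set d : α → ℕ := fun i => (T.filter (fun e => i ∈ e)).card with hd
  have huniq_edge : ∀ x, d x = 1 → ∀ e, x ∈ e → e ∈ T →
      T.filter (fun e => x ∈ e) = {e} := by
    intro x hdx e hxe heT
    obtain ⟨e', he'⟩ := Finset.card_eq_one.1 hdx
    rw [he']
    have : e ∈ T.filter (fun e => x ∈ e) := Finset.mem_filter.2 ⟨heT, hxe⟩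
    rw [he', Finset.mem_singleton] at this
    rw [this]
  have hhs : ∑ i ∈ S, d i = 2 * T.card := by
    have hdi : ∀ i, d i = ∑ e ∈ T, if i ∈ e then 1 else 0 := fun i => Finset.card_filter _ _
    have step : ∀ e ∈ T, ∑ i ∈ S, (if i ∈ e then 1 else 0) = 2 := by
      intro e he
      obtain ⟨i, j, hij, rfl, -, hiS, hjS⟩ := hT.1 e he
      rw [← Finset.card_filter]
      have hfil : S.filter (fun x => x ∈ s(i, j)) = {i, j} := by
        ext x
        simp only [Finset.mem_filter, Sym2.mem_iff, Finset.mem_insert, Finset.mem_singleton]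
        constructor
        · rintro ⟨-, rfl | rfl⟩
          · exact Or.inl rfl
          · exact Or.inr rfl
        · rintro (rfl | rfl)
          · exact ⟨hiS, Or.inl rfl⟩
          · exact ⟨hjS, Or.inr rfl⟩
      rw [hfil, Finset.card_insert_of_notMem (by simp [hij]), Finset.card_singleton]
    calc ∑ i ∈ S, d i = ∑ e ∈ T, ∑ i ∈ S, (if i ∈ e then 1 else 0) := by
          simp_rw [hdi]; rw [Finset.sum_comm]
      _ = ∑ _e ∈ T, 2 := Finset.sum_congr rfl step
      _ = 2 * T.card := by rw [Finset.sum_const, smul_eq_mul, mul_comm]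
  have hmin : ∀ i ∈ S, 1 ≤ d i := by
    intro i hi
    obtain ⟨j, hjS, hji⟩ := Finset.exists_mem_ne (s := S) (by omega) i
    have hreach := hT.2.1 i hi j hjS
    rcases hreach.cases_head with heq | ⟨c, hc, -⟩
    · exact absurd heq.symm hji
    · exact Finset.card_pos.2 ⟨s(i, c), Finset.mem_filter.2 ⟨hc, by simp⟩⟩
  -- find a leaf ≠ q
  have hleaf : ∃ x ∈ S, x ≠ q ∧ d x = 1 := by
    by_contra hcon
    push_neg at hcon
    have h2d : ∀ x ∈ S.erase q, 2 ≤ d x := by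
      intro x hx
      rw [Finset.mem_erase] at hx
      have h1 := hmin x hx.2
      have h2 := hcon x hx.2 hx.1
      omega
    have hsum : (S.erase q).card * 2 ≤ ∑ x ∈ S.erase q, d x := by
      have := Finset.sum_le_sum h2d
      rwa [Finset.sum_const, smul_eq_mul] at this
    have hce : (S.erase q).card = T.card := by
      rw [Finset.card_erase_of_mem hq]
      have := hT.2.2
      omega
    have hq1 := hmin q hq
    have hsplit : ∑ x ∈ S.erase q, d x + d q = ∑ i ∈ S, d i := Finset.sum_erase_add S d hq
    rw [hce] at hsum
    omega
  obtain ⟨x, hxS, hxq, hdx⟩ := hleaf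
  -- the unique edge at x
  have hone : (T.filter (fun e => x ∈ e)).card = 1 := hdx
  obtain ⟨e, hee⟩ := Finset.card_eq_one.1 hone
  have heT : e ∈ T ∧ x ∈ e := by
    have : e ∈ T.filter (fun e => x ∈ e) := by rw [hee]; exact Finset.mem_singleton_self e
    exact Finset.mem_filter.1 this
  have huniqe : ∀ e' ∈ T, x ∈ e' → e' = e := by
    intro e' he' hxe'
    have : e' ∈ T.filter (fun e => x ∈ e) := Finset.mem_filter.2 ⟨he', hxe'⟩
    rw [hee, Finset.mem_singleton] at this
    exact this
  have hkey : ∃ y, y ≠ x ∧ y ∈ S ∧ (x, y) ∈ P.edges ∧ e = s(x, y) := by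
    obtain ⟨i, j, hij, hesij, hedge, hiS, hjS⟩ := hT.1 e heT.1
    rcases Sym2.mem_iff.1 (hesij ▸ heT.2) with rfl | rfl
    · exact ⟨j, fun hh => hij hh.symm, hjS, hedge, hesij⟩
    · exact ⟨i, hij, hiS, P.symm_mem _ _ hedge, by rw [hesij, Sym2.eq_swap]⟩
  obtain ⟨y, hyx, hyS, hxye, he⟩ := hkey
  -- the smaller tree
  set S' : Finset α := S.erase x with hS'
  set T' : Finset (Sym2 α) := T.erase e with hT'
  have hqS' : q ∈ S' := Finset.mem_erase.2 ⟨Ne.symm hxq, hq⟩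
  have hyS' : y ∈ S' := Finset.mem_erase.2 ⟨hyx, hyS⟩
  have hedges' : ∀ e' ∈ T', ∃ i j, i ≠ j ∧ e' = s(i, j) ∧ (i, j) ∈ P.edges ∧ i ∈ S' ∧ j ∈ S' := by
    intro e' he'
    have he'T : e' ∈ T := Finset.mem_of_mem_erase he'
    have he'ne : e' ≠ e := Finset.ne_of_mem_erase he'
    obtain ⟨i, j, hij, rfl, hedge, hiS, hjS⟩ := hT.1 e' he'T
    have hix : i ≠ x := by
      rintro rfl
      exact he'ne (huniqe _ he'T (by simp))
    have hjx : j ≠ x := by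
      rintro rfl
      exact he'ne (huniqe _ he'T (by simp))
    exact ⟨i, j, hij, rfl, hedge, Finset.mem_erase.2 ⟨hix, hiS⟩, Finset.mem_erase.2 ⟨hjx, hjS⟩⟩
  have hsurg : ∀ a b, Relation.ReflTransGen (fun u v => s(u, v) ∈ T) a b → a ≠ x →
      (b ≠ x → Relation.ReflTransGen (fun u v => s(u, v) ∈ T') a b) ∧
      (b = x → Relation.ReflTransGen (fun u v => s(u, v) ∈ T') a y) := by
    intro a b hab
    induction hab with
    | refl => exact fun hax => ⟨fun _ => Relation.ReflTransGen.refl, fun hh => absurd hh hax⟩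
    | @tail c b hac hcb ih =>
      intro hax
      constructor
      · intro hbx
        by_cases hcx : c = x
        · subst hcx
          have hce : s(c, b) = e := huniqe _ hcb (by simp)
          have hby : b = y := by
            rw [he] at hce
            rcases Sym2.eq_iff.1 hce with ⟨-, hb2⟩ | ⟨-, hb2⟩
            · exact hb2
            · exact absurd hb2 hbx
          rw [hby]
          exact (ih hax).2 rfl
        · have h1 := (ih hax).1 hcx
          have hne : s(c, b) ≠ e := by
            rw [he]
            intro hh
            rcases Sym2.eq_iff.1 hh with ⟨hc1, -⟩ | ⟨-, hb2⟩
            · exact hcx hc1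
            · exact hbx hb2
          exact h1.tail (Finset.mem_erase.2 ⟨hne, hcb⟩)
      · rintro rfl
        have hce : s(c, b) = e := huniqe _ hcb (by simp)
        have hcy : c = y := by
          rw [he] at hce
          rcases Sym2.eq_iff.1 hce with ⟨hc1, hxy2⟩ | ⟨hc1, -⟩
          · exact absurd hxy2.symm hyx
          · exact hc1
        subst hcy
        exact (ih hax).1 (fun hh => hyx hh)
  have hconn' : ∀ i ∈ S', ∀ j ∈ S', Relation.ReflTransGen (fun a b => s(a, b) ∈ T') i j := by
    intro i hi j hj
    rw [Finset.mem_erase] at hi hj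
    exact (hsurg i j (hT.2.1 i hi.2 j hj.2) hi.1).1 hj.1
  have hcard' : T'.card + 1 = S'.card := by
    rw [Finset.card_erase_of_mem heT.1, Finset.card_erase_of_mem hxS]
    have h2 := hT.2.2
    have : 1 ≤ T.card := Finset.card_pos.2 ⟨e, heT.1⟩
    omega
  have hScard' : S'.card = n - 1 := by
    rw [Finset.card_erase_of_mem hxS, hcard]
  obtain ⟨Tq', hTq', hund'⟩ := ih (n - 1) (by omega) S' T' q hScard'
    ⟨hedges', hconn', hcard'⟩ hqS'
  refine ⟨insert (x, y) Tq', ⟨hq, ?_, ?_, ?_, ?_, ?_⟩, ?_⟩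
  · intro a ha
    rcases Finset.mem_insert.1 ha with rfl | ha'
    · exact Finset.mem_filter.2 ⟨hxye, Ne.symm hyx⟩
    · exact hTq'.2.1 ha'
  · intro a ha
    rcases Finset.mem_insert.1 ha with rfl | ha'
    · exact ⟨hxS, hyS⟩
    · exact ⟨Finset.mem_of_mem_erase (hTq'.2.2.1 a ha').1,
        Finset.mem_of_mem_erase (hTq'.2.2.1 a ha').2⟩
  · intro i hi hiq
    by_cases hix : i = x
    · subst hix
      refine ⟨y, Finset.mem_insert_self _ _, ?_⟩
      intro j hj
      rcases Finset.mem_insert.1 hj with hh | hh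
      · exact (Prod.mk.injEq _ _ _ _ ▸ hh).2
      · exact absurd (hTq'.2.2.1 _ hh).1 (by simp [hS'])
    · obtain ⟨j, hj, hju⟩ := hTq'.2.2.2.1 i (Finset.mem_erase.2 ⟨hix, hi⟩) hiq
      refine ⟨j, Finset.mem_insert_of_mem hj, ?_⟩
      intro j' hj'
      rcases Finset.mem_insert.1 hj' with hh | hh
      · exact absurd (Prod.mk.injEq _ _ _ _ ▸ hh).1 hix
      · exact hju j' hh
  · intro j hj
    rcases Finset.mem_insert.1 hj with hh | hh
    · exact hxq (Prod.mk.injEq _ _ _ _ ▸ hh).1.symm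
    · exact hTq'.2.2.2.2.1 j hh
  · intro i hi
    have hmono : ∀ u v, arcRel Tq' u v → arcRel (insert (x, y) Tq') u v :=
      fun u v hh => Finset.mem_insert_of_mem hh
    by_cases hix : i = x
    · subst hix
      exact Relation.ReflTransGen.head (Finset.mem_insert_self _ _)
        (Relation.ReflTransGen.mono hmono _ _ (hTq'.2.2.2.2.2 y hyS'))
    · exact (Relation.ReflTransGen.mono hmono _ _ (hTq'.2.2.2.2.2 i (Finset.mem_erase.2 ⟨hix, hi⟩)))
  · rw [undir, Finset.image_insert]
    have : undir Tq' = T' := hund'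
    rw [← undir, this, ← he, Finset.insert_erase heT.1]

end Aux2

/-- Assertion 6.  If `S ⊊ N`, `𝓣_S ≠ ∅`, and `P` has an edge
joining `S` to its complement, then
`λ^∘_S = ν_S - ∑_{t ∈ S} p t t + min {p q r : q ∈ S, r ∉ S, (q,r) an edge of P}`. -/
theorem statement13 (P : PotGraph α) (S : Finset α) (hS : S ⊂ Finset.univ)
    (hne : ∃ T, IsUTreeOn P T S)
    (hcross : ∃ e : α × α, e.1 ∈ S ∧ e.2 ∉ S ∧ e ∈ P.edges) :
    lamCirc (bw P) (barcs P) S =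
      nu P S - ((∑ t ∈ S, P.p t t : ℝ) : EReal) +
        sInf ((fun e : α × α => ((P.p e.1 e.2 : ℝ) : EReal)) ''
          {e : α × α | e.1 ∈ S ∧ e.2 ∉ S ∧ e ∈ P.edges}) := by
  classical
  set c : ℝ := ∑ t ∈ S, P.p t t with hc
  -- the minimum cross edge
  obtain ⟨me, hmem, hmeq⟩ : ∃ e ∈ {e : α × α | e.1 ∈ S ∧ e.2 ∉ S ∧ e ∈ P.edges},
      sInf ((fun e : α × α => ((P.p e.1 e.2 : ℝ) : EReal)) ''
        {e : α × α | e.1 ∈ S ∧ e.2 ∉ S ∧ e ∈ P.edges}) = ((P.p e.1 e.2 : ℝ) : EReal) := by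
    have hfin : ((fun e : α × α => ((P.p e.1 e.2 : ℝ) : EReal)) ''
        {e : α × α | e.1 ∈ S ∧ e.2 ∉ S ∧ e ∈ P.edges}).Finite := Set.toFinite _
    have hnem : ((fun e : α × α => ((P.p e.1 e.2 : ℝ) : EReal)) ''
        {e : α × α | e.1 ∈ S ∧ e.2 ∉ S ∧ e ∈ P.edges}).Nonempty := by
      obtain ⟨e, he⟩ := hcross
      exact ⟨_, ⟨e, he, rfl⟩⟩
    obtain ⟨e, he, heq⟩ := hnem.csInf_mem hfin
    exact ⟨e, he, heq.symm⟩
  obtain ⟨hq1S, hr1S, hedge1⟩ := hmem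
  -- the minimum undirected tree
  obtain ⟨Tstar, hTstar, hnueq⟩ : ∃ T, IsUTreeOn P T S ∧ nu P S = ((uweight P T : ℝ) : EReal) := by
    have hfin : ((fun T => ((uweight P T : ℝ) : EReal)) '' {T | IsUTreeOn P T S}).Finite :=
      Set.toFinite _
    have hnem : ((fun T => ((uweight P T : ℝ) : EReal)) '' {T | IsUTreeOn P T S}).Nonempty := by
      obtain ⟨T, hT⟩ := hne
      exact ⟨_, ⟨T, hT, rfl⟩⟩
    obtain ⟨T, hT, heq⟩ := hnem.csInf_mem hfin
    exact ⟨T, hT, heq.symm⟩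
  -- orient Tstar toward me.1
  obtain ⟨Tq, hTq, hund⟩ := exists_orient P S.card S Tstar me.1 rfl hTstar hq1S
  have hbarc1 : (me.1, me.2) ∈ barcs P := by
    refine Finset.mem_filter.2 ⟨hedge1, ?_⟩
    intro hh
    rw [hh] at hq1S
    exact hr1S hq1S
  -- the candidate circ tree
  have hcand : insert (me.1, me.2) Tq ∈ {T | ∃ q ∈ S, IsCTreeOn (barcs P) T S q} :=
    ⟨me.1, hq1S, me.2, hr1S, Tq, hTq, hbarc1, rfl⟩
  have hcandw : aweight (bw P) (insert (me.1, me.2) Tq) =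
      uweight P Tstar - c + P.p me.1 me.2 := by
    rw [aweight, Finset.sum_insert (hTq.2.2.2.2.1 me.2)]
    have h1 : ∑ a ∈ Tq, bw P a.1 a.2 = aweight (bw P) Tq := rfl
    rw [h1, aweight_tree P hTq, hund, bw]
    ring
  -- lamCirc is attained
  obtain ⟨T0, hT0, hlam0⟩ : ∃ T ∈ {T | ∃ q ∈ S, IsCTreeOn (barcs P) T S q},
      lamCirc (bw P) (barcs P) S = ((aweight (bw P) T : ℝ) : EReal) := by
    have hfin : ((fun T => ((aweight (bw P) T : ℝ) : EReal)) ''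
        {T | ∃ q ∈ S, IsCTreeOn (barcs P) T S q}).Finite := Set.toFinite _
    have hnem : ((fun T => ((aweight (bw P) T : ℝ) : EReal)) ''
        {T | ∃ q ∈ S, IsCTreeOn (barcs P) T S q}).Nonempty := ⟨_, ⟨_, hcand, rfl⟩⟩
    obtain ⟨T, hT, heq⟩ := hnem.csInf_mem hfin
    exact ⟨T, hT, heq.symm⟩
  obtain ⟨q0, hq0S, r0, hr0, T0', hT0', hbarc0, hT0eq⟩ := hT0
  -- weight of T0
  have hw0 : aweight (bw P) T0 = uweight P (undir T0') - c + P.p q0 r0 := by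
    rw [hT0eq, aweight, Finset.sum_insert (hT0'.2.2.2.2.1 r0)]
    have h1 : ∑ a ∈ T0', bw P a.1 a.2 = aweight (bw P) T0' := rfl
    rw [h1, aweight_tree P hT0', bw]
    ring
  -- inequality 1 : nu ≤ uweight (undir T0')
  have hle1 : uweight P Tstar ≤ uweight P (undir T0') := by
    have hmem' : ((uweight P (undir T0') : ℝ) : EReal) ∈
        ((fun T => ((uweight P T : ℝ) : EReal)) '' {T | IsUTreeOn P T S}) :=
      ⟨undir T0', undir_isUTreeOn P hT0', rfl⟩
    have h2 : nu P S ≤ ((uweight P (undir T0') : ℝ) : EReal) := sInf_le hmem'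
    rw [hnueq] at h2
    exact_mod_cast h2
  -- inequality 2 : min cross ≤ p q0 r0
  have hle2 : P.p me.1 me.2 ≤ P.p q0 r0 := by
    have hcross0 : (q0, r0) ∈ {e : α × α | e.1 ∈ S ∧ e.2 ∉ S ∧ e ∈ P.edges} :=
      ⟨hq0S, hr0, (Finset.mem_filter.1 hbarc0).1⟩
    have hmem2 : ((P.p q0 r0 : ℝ) : EReal) ∈
        (fun e : α × α => ((P.p e.1 e.2 : ℝ) : EReal)) ''
          {e : α × α | e.1 ∈ S ∧ e.2 ∉ S ∧ e ∈ P.edges} := ⟨(q0, r0), hcross0, rfl⟩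
    have h2 := sInf_le hmem2
    rw [hmeq] at h2
    exact_mod_cast h2
  -- inequality 3 : lamCirc ≤ candidate weight
  have hle3 : aweight (bw P) T0 ≤ uweight P Tstar - c + P.p me.1 me.2 := by
    have hmem' : ((aweight (bw P) (insert (me.1, me.2) Tq) : ℝ) : EReal) ∈
        ((fun T => ((aweight (bw P) T : ℝ) : EReal)) ''
          {T | ∃ q ∈ S, IsCTreeOn (barcs P) T S q}) := ⟨_, hcand, rfl⟩
    have h := sInf_le hmem'
    rw [lamCirc, minW] at hlam0
    rw [hlam0, hcandw] at h
    exact_mod_cast h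
  -- conclude
  rw [hlam0, hnueq, hmeq, ← EReal.coe_sub, ← EReal.coe_add, EReal.coe_eq_coe_iff]
  rw [hw0] at hle3 ⊢
  linarith

end BarrierForests
end
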